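/- arXiv:1304.2001 — 2 statements merged into one kernel-verified Lean document; each statement's English description precedes it below -/
import Mathlib

section
/- Assume condition (A3). Then for every λ > 0, the equality ∫₀^∞ F(v_s(λ)) ds = ∫₀^{λ} F(r)/ψ(r) dr holds, where both sides take values in [0, ∞]. In particular, condition (A2) holds if and only if ∫₀^∞ F(v_s(λ)) ds < ∞ for every λ > 0. -/
open MeasureTheory Real Set Filter
open Topology
open scoped ENNReal

/-- The (sub)-critical branching mechanism
`ψ(z) = b z + σ z² + ∫₀^∞ (e^{−z u} − 1 + z u) m(du)`. -/
noncomputable def psi (b σ : ℝ) (m : Measure ℝ) (z : ℝ) : ℝ :=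
  b * z + σ * z ^ 2 + ∫ u in Ioi (0 : ℝ), (Real.exp (-(z * u)) - 1 + z * u) ∂m

/-- Condition (A3): either `σ > 0` or `∫₀^1 u m(du) = ∞`. -/
def condA3 (σ : ℝ) (m : Measure ℝ) : Prop :=
  0 < σ ∨ ∫⁻ u in Ioc (0 : ℝ) 1, ENNReal.ofReal u ∂m = ⊤

/-- `v t λ ∈ (0, λ]` is the unique solution of `∫_{v_t(λ)}^{λ} dz/ψ(z) = t`
(the cumulant semigroup). -/
def IsCumulant (b σ : ℝ) (m : Measure ℝ) (v : ℝ → ℝ → ℝ) : Prop :=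
  ∀ lam > (0 : ℝ), ∀ t ≥ (0 : ℝ),
    v t lam ∈ Ioc 0 lam ∧ ∫ z in (v t lam)..lam, (psi b σ m z)⁻¹ = t

/-- The immigration mechanism `F(z) = β z + ∫₀^∞ (1 − e^{−z u}) n(du)`. -/
noncomputable def Fim (β : ℝ) (n : Measure ℝ) (z : ℝ) : ℝ :=
  β * z + ∫ u in Ioi (0 : ℝ), (1 - Real.exp (-(z * u))) ∂n


open MeasureTheory Real Set Filter Topology
open scoped ENNReal

lemma expm_nonneg {x : ℝ} : 0 ≤ Real.exp (-x) - 1 + x := by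
  nlinarith [Real.add_one_le_exp (-x)]

lemma expm_le_sq {x : ℝ} (hx : 0 ≤ x) : Real.exp (-x) - 1 + x ≤ x ^ 2 := by
  rcases le_or_gt x 1 with h | h
  · have := Real.abs_exp_sub_one_sub_id_le (x := -x) (by rw [abs_neg, abs_of_nonneg hx]; exact h)
    rw [abs_le] at this
    nlinarith [this.2]
  · have : Real.exp (-x) ≤ 1 := Real.exp_le_one_iff.mpr (by linarith)
    nlinarith

lemma expm_le_id {x : ℝ} (hx : 0 ≤ x) : Real.exp (-x) - 1 + x ≤ x := by
  have : Real.exp (-x) ≤ 1 := Real.exp_le_one_iff.mpr (by linarith)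
  linarith

lemma expm_bound {z u : ℝ} (hz : 0 ≤ z) (hu : 0 < u) :
    Real.exp (-(z * u)) - 1 + z * u ≤ max z (z ^ 2) * min u (u ^ 2) := by
  rcases le_or_gt u 1 with h | h
  · rw [min_eq_right (by nlinarith)]
    rcases le_or_gt (z * u) 1 with h2 | h2
    · calc Real.exp (-(z * u)) - 1 + z * u ≤ (z * u) ^ 2 := expm_le_sq (by positivity)
        _ = z ^ 2 * u ^ 2 := by ring
        _ ≤ max z (z ^ 2) * u ^ 2 := by nlinarith [le_max_right z (z^2), sq_nonneg u]
    · calc Real.exp (-(z * u)) - 1 + z * u ≤ z * u := expm_le_id (by positivity)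
        _ ≤ z ^ 2 * u ^ 2 := by nlinarith
        _ ≤ max z (z ^ 2) * u ^ 2 := by nlinarith [le_max_right z (z^2), sq_nonneg u]
  · rw [min_eq_left (by nlinarith)]
    calc Real.exp (-(z * u)) - 1 + z * u ≤ z * u := expm_le_id (by positivity)
      _ ≤ max z (z ^ 2) * u := by nlinarith [le_max_left z (z^2)]

lemma expm_mono {u a b : ℝ} (hu : 0 ≤ u) (ha : 0 ≤ a) (hab : a ≤ b) :
    Real.exp (-(a * u)) - 1 + a * u ≤ Real.exp (-(b * u)) - 1 + b * u := by
  have h1 : Real.exp (-(a*u)) - Real.exp (-(b*u)) = Real.exp (-(a*u)) * (1 - Real.exp (-(b*u - a*u))) := by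
    rw [mul_sub, ← Real.exp_add]; ring_nf
  have h2 : 1 - Real.exp (-(b*u - a*u)) ≤ b*u - a*u := by nlinarith [Real.add_one_le_exp (-(b*u-a*u))]
  have h3 : Real.exp (-(a*u)) ≤ 1 := Real.exp_le_one_iff.mpr (by nlinarith)
  have h4 : Real.exp (-(b*u-a*u)) ≤ 1 := Real.exp_le_one_iff.mpr (by nlinarith)
  nlinarith [Real.exp_pos (-(a*u))]

lemma one_sub_exp_nonneg {x : ℝ} (hx : 0 ≤ x) : 0 ≤ 1 - Real.exp (-x) :=
  sub_nonneg.mpr (Real.exp_le_one_iff.mpr (by linarith))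

lemma one_sub_exp_bound {z u : ℝ} (hz : 0 ≤ z) (hu : 0 < u) :
    1 - Real.exp (-(z * u)) ≤ max 1 z * min 1 u := by
  have hle1 : 1 - Real.exp (-(z*u)) ≤ 1 := by nlinarith [Real.exp_pos (-(z*u))]
  have hlex : 1 - Real.exp (-(z*u)) ≤ z * u := by nlinarith [Real.add_one_le_exp (-(z*u))]
  rcases le_or_gt u 1 with h | h
  · rw [min_eq_right h]
    rcases le_or_gt z 1 with h2 | h2
    · calc 1 - Real.exp (-(z*u)) ≤ z * u := hlex
        _ ≤ max 1 z * u := by nlinarith [le_max_right (1:ℝ) z]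
    · calc 1 - Real.exp (-(z*u)) ≤ z * u := hlex
        _ ≤ max 1 z * u := by nlinarith [le_max_right (1:ℝ) z]
  · rw [min_eq_left h.le, mul_one]
    exact hle1.trans (le_max_left 1 z)

lemma one_sub_exp_mono {u a b : ℝ} (hu : 0 ≤ u) (hab : a ≤ b) :
    1 - Real.exp (-(a * u)) ≤ 1 - Real.exp (-(b * u)) := by
  have : Real.exp (-(b*u)) ≤ Real.exp (-(a*u)) := Real.exp_le_exp.mpr (by nlinarith)
  linarith

section aux
variable {b σ β : ℝ} {m n : Measure ℝ}

lemma psi_integrand_integrable (hm : IntegrableOn (fun u => min u (u ^ 2)) (Ioi 0) m)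
    {z : ℝ} (hz : 0 ≤ z) :
    IntegrableOn (fun u => Real.exp (-(z * u)) - 1 + z * u) (Ioi 0) m := by
  refine (hm.const_mul (max z (z ^ 2))).mono ?_ ?_
  · exact (((Real.continuous_exp.comp (continuous_const.mul continuous_id).neg).sub
      continuous_const).add (continuous_const.mul continuous_id)).aestronglyMeasurable
  · refine (ae_restrict_iff' measurableSet_Ioi).mpr (ae_of_all _ fun u hu => ?_)
    rw [Real.norm_eq_abs, abs_of_nonneg expm_nonneg]
    exact (expm_bound hz hu).trans (le_abs_self _)

lemma fim_integrand_integrable (hn : IntegrableOn (fun u => min 1 u) (Ioi 0) n)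
    {z : ℝ} (hz : 0 ≤ z) :
    IntegrableOn (fun u => 1 - Real.exp (-(z * u))) (Ioi 0) n := by
  refine (hn.const_mul (max 1 z)).mono ?_ ?_
  · exact (continuous_const.sub
      (Real.continuous_exp.comp (continuous_const.mul continuous_id).neg)).aestronglyMeasurable
  · refine (ae_restrict_iff' measurableSet_Ioi).mpr (ae_of_all _ fun u hu => ?_)
    rw [Real.norm_eq_abs, abs_of_nonneg (one_sub_exp_nonneg (mul_nonneg hz (le_of_lt hu)))]
    exact (one_sub_exp_bound hz hu).trans (le_abs_self _)

lemma psi_nonneg (hb : 0 ≤ b) (hσ : 0 ≤ σ) {z : ℝ} (hz : 0 ≤ z) : 0 ≤ psi b σ m z := by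
  have h := integral_nonneg (μ := m.restrict (Ioi 0))
    (f := fun u => Real.exp (-(z * u)) - 1 + z * u) (fun u => expm_nonneg)
  unfold psi; positivity

lemma fim_nonneg (hβ : 0 ≤ β) {z : ℝ} (hz : 0 ≤ z) : 0 ≤ Fim β n z := by
  have h := setIntegral_nonneg (μ := n) measurableSet_Ioi
    (f := fun u => 1 - Real.exp (-(z * u)))
    (fun u hu => one_sub_exp_nonneg (mul_nonneg hz (le_of_lt hu)))
  unfold Fim; positivity

lemma psi_mono (hb : 0 ≤ b) (hσ : 0 ≤ σ) (hm : IntegrableOn (fun u => min u (u ^ 2)) (Ioi 0) m)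
    {x y : ℝ} (hx : 0 ≤ x) (hxy : x ≤ y) : psi b σ m x ≤ psi b σ m y := by
  unfold psi
  have h := setIntegral_mono_on (psi_integrand_integrable hm hx)
    (psi_integrand_integrable hm (hx.trans hxy)) measurableSet_Ioi
    (fun u hu => expm_mono (le_of_lt hu) hx hxy)
  have : b * x ≤ b * y := by nlinarith
  have : σ * x ^ 2 ≤ σ * y ^ 2 := mul_le_mul_of_nonneg_left (by nlinarith) hσ
  linarith

lemma fim_mono (hβ : 0 ≤ β) (hn : IntegrableOn (fun u => min 1 u) (Ioi 0) n)
    {x y : ℝ} (hx : 0 ≤ x) (hxy : x ≤ y) : Fim β n x ≤ Fim β n y := by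
  unfold Fim
  have h := setIntegral_mono_on (fim_integrand_integrable hn hx)
    (fim_integrand_integrable hn (hx.trans hxy)) measurableSet_Ioi
    (fun u hu => one_sub_exp_mono (le_of_lt hu) hxy)
  have : β * x ≤ β * y := by nlinarith
  linarith

lemma psi_pos (hb : 0 ≤ b) (hσ : 0 ≤ σ) (hm : IntegrableOn (fun u => min u (u ^ 2)) (Ioi 0) m)
    (hA3 : condA3 σ m) {z : ℝ} (hz : 0 < z) : 0 < psi b σ m z := by
  have hint := integral_nonneg (μ := m.restrict (Ioi 0))
    (f := fun u => Real.exp (-(z * u)) - 1 + z * u) (fun u => expm_nonneg)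
  rcases hA3 with hσ' | hminf
  · have : 0 < σ * z ^ 2 := by positivity
    unfold psi; nlinarith
  · have hI : 0 < ∫ u in Ioi (0:ℝ), (Real.exp (-(z * u)) - 1 + z * u) ∂m := by
      rcases lt_or_eq_of_le hint with h | h
      · exact h
      · exfalso
        have h0 : (fun u => Real.exp (-(z * u)) - 1 + z * u) =ᵐ[m.restrict (Ioi 0)] 0 :=
          (setIntegral_eq_zero_iff_of_nonneg_ae (ae_of_all _ fun u => expm_nonneg)
            (psi_integrand_integrable hm hz.le)).mp h.symm
        have hnull : m.restrict (Ioi 0) (Ioc (0:ℝ) 1) = 0 := by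
          have : ∀ᵐ u ∂m.restrict (Ioi 0), u ∉ Ioc (0:ℝ) 1 := by
            filter_upwards [h0] with u hu hmem
            have : 0 < Real.exp (-(z * u)) - 1 + z * u := by
              have hne : -(z * u) ≠ 0 := by
                have : 0 < z * u := by nlinarith [hmem.1]
                simpa using this.ne'
              nlinarith [Real.add_one_lt_exp hne]
            simp only [Pi.zero_apply] at hu; linarith
          exact measure_eq_zero_iff_ae_notMem.mpr this
        rw [Measure.restrict_apply measurableSet_Ioc] at hnull
        have : Ioc (0:ℝ) 1 ∩ Ioi 0 = Ioc 0 1 := by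
          ext u; simp only [mem_inter_iff, mem_Ioc, mem_Ioi, and_iff_left_iff_imp]
          exact fun h => h.1
        rw [this] at hnull
        rw [← Measure.restrict_eq_zero] at hnull
        rw [hnull] at hminf
        simp at hminf
    have h1 : 0 ≤ b * z := by positivity
    have h2 : 0 ≤ σ * z ^ 2 := by positivity
    unfold psi; linarith

end aux

section aux2
variable {b σ β : ℝ} {m n : Measure ℝ}

lemma psi_continuousAt (hm : IntegrableOn (fun u => min u (u ^ 2)) (Ioi 0) m)
    {z : ℝ} (hz : 0 < z) : ContinuousAt (psi b σ m) z := by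
  unfold psi
  refine ContinuousAt.add (by fun_prop) ?_
  refine continuousAt_of_dominated (F := fun z' u => Real.exp (-(z' * u)) - 1 + z' * u)
    (bound := fun u => max (z + 1) ((z + 1) ^ 2) * min u (u ^ 2)) ?_ ?_ ?_ ?_
  · exact Eventually.of_forall fun z' =>
      (((Real.continuous_exp.comp (continuous_const.mul continuous_id).neg).sub
        continuous_const).add (continuous_const.mul continuous_id)).aestronglyMeasurable
  · have hmem : Ioo (0:ℝ) (z + 1) ∈ 𝓝 z := isOpen_Ioo.mem_nhds ⟨hz, by linarith⟩
    filter_upwards [hmem] with z' hz'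
    refine (ae_restrict_iff' measurableSet_Ioi).mpr (ae_of_all _ fun u hu => ?_)
    rw [Real.norm_eq_abs, abs_of_nonneg expm_nonneg]
    refine (expm_bound hz'.1.le hu).trans ?_
    have h1 : max z' (z' ^ 2) ≤ max (z + 1) ((z + 1) ^ 2) :=
      max_le_max hz'.2.le (by nlinarith [hz'.1.le, hz'.2.le])
    have h2 : (0:ℝ) ≤ min u (u ^ 2) := le_min (le_of_lt hu) (by positivity)
    nlinarith
  · exact hm.const_mul _
  · exact ae_of_all _ fun u => by fun_prop

lemma fim_continuousAt (hn : IntegrableOn (fun u => min 1 u) (Ioi 0) n)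
    {z : ℝ} (hz : 0 < z) : ContinuousAt (Fim β n) z := by
  unfold Fim
  refine ContinuousAt.add (by fun_prop) ?_
  refine continuousAt_of_dominated (F := fun z' u => 1 - Real.exp (-(z' * u)))
    (bound := fun u => max 1 (z + 1) * min 1 u) ?_ ?_ ?_ ?_
  · exact Eventually.of_forall fun z' => (continuous_const.sub
      (Real.continuous_exp.comp (continuous_const.mul continuous_id).neg)).aestronglyMeasurable
  · have hmem : Ioo (0:ℝ) (z + 1) ∈ 𝓝 z := isOpen_Ioo.mem_nhds ⟨hz, by linarith⟩
    filter_upwards [hmem] with z' hz'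
    refine (ae_restrict_iff' measurableSet_Ioi).mpr (ae_of_all _ fun u hu => ?_)
    rw [Real.norm_eq_abs, abs_of_nonneg (one_sub_exp_nonneg (mul_nonneg hz'.1.le hu.le))]
    refine (one_sub_exp_bound hz'.1.le hu).trans ?_
    have h1 : max 1 z' ≤ max 1 (z + 1) := max_le_max le_rfl hz'.2.le
    have h2 : (0:ℝ) ≤ min 1 u := le_min one_pos.le (le_of_lt hu)
    nlinarith
  · exact hn.const_mul _
  · exact ae_of_all _ fun u => by fun_prop

lemma psi_continuousOn (hm : IntegrableOn (fun u => min u (u ^ 2)) (Ioi 0) m) :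
    ContinuousOn (psi b σ m) (Ioi 0) := fun z hz =>
  (psi_continuousAt hm hz).continuousWithinAt

lemma psi_inv_continuousOn (hb : 0 ≤ b) (hσ : 0 ≤ σ)
    (hm : IntegrableOn (fun u => min u (u ^ 2)) (Ioi 0) m) (hA3 : condA3 σ m) :
    ContinuousOn (fun z => (psi b σ m z)⁻¹) (Ioi 0) :=
  (psi_continuousOn hm).inv₀ fun z hz => (psi_pos hb hσ hm hA3 hz).ne'

end aux2

section aux3
variable {b σ β : ℝ} {m n : Measure ℝ}

lemma lintegral_image_eq_lintegral_abs_deriv_mul' {s : Set ℝ} {f f' : ℝ → ℝ}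
    (hs : MeasurableSet s) (hf' : ∀ x ∈ s, HasDerivWithinAt f (f' x) s x)
    (hf : InjOn f s) (g : ℝ → ℝ≥0∞) :
    ∫⁻ x in f '' s, g x = ∫⁻ x in s, ENNReal.ofReal |f' x| * g (f x) := by
  simpa only [ContinuousLinearMap.det_toSpanSingleton] using
    lintegral_image_eq_lintegral_abs_det_fderiv_mul volume hs
      (fun x hx => (hf' x hx).hasFDerivWithinAt) hf g

variable (hb : 0 ≤ b) (hσ : 0 ≤ σ)
  (hm : IntegrableOn (fun u => min u (u ^ 2)) (Ioi 0) m) (hA3 : condA3 σ m)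

include hb hσ hm hA3

lemma psi_inv_intervalIntegrable {x y : ℝ} (hx : 0 < x) (hy : 0 < y) :
    IntervalIntegrable (fun z => (psi b σ m z)⁻¹) volume x y := by
  apply ContinuousOn.intervalIntegrable
  apply (psi_inv_continuousOn hb hσ hm hA3).mono
  intro t ht
  rcases ht with ⟨h1, _⟩
  have := lt_min hx hy
  exact lt_of_lt_of_le this (by simpa [min_le_iff] using h1)

lemma T_strictAntiOn {lam : ℝ} (hlam : 0 < lam) :
    StrictAntiOn (fun r => ∫ z in r..lam, (psi b σ m z)⁻¹) (Ioc 0 lam) := by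
  intro x hx y hy hxy
  have hInt1 : IntervalIntegrable (fun z => (psi b σ m z)⁻¹) volume x y :=
    psi_inv_intervalIntegrable hb hσ hm hA3 hx.1 hy.1
  have hInt2 : IntervalIntegrable (fun z => (psi b σ m z)⁻¹) volume y lam :=
    psi_inv_intervalIntegrable hb hσ hm hA3 hy.1 hlam
  have hsplit : (∫ z in x..y, (psi b σ m z)⁻¹) + (∫ z in y..lam, (psi b σ m z)⁻¹)
      = ∫ z in x..lam, (psi b σ m z)⁻¹ :=
    intervalIntegral.integral_add_adjacent_intervals hInt1 hInt2
  have hpos : 0 < ∫ z in x..y, (psi b σ m z)⁻¹ := by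
    apply intervalIntegral.intervalIntegral_pos_of_pos_on hInt1 _ hxy
    intro t ht
    exact inv_pos.mpr (psi_pos hb hσ hm hA3 (hx.1.trans ht.1))
  simp only
  linarith

lemma T_hasDerivAt {lam r : ℝ} (hlam : 0 < lam) (hr : 0 < r) :
    HasDerivAt (fun x => ∫ z in x..lam, (psi b σ m z)⁻¹) (-(psi b σ m r)⁻¹) r := by
  have h : HasDerivAt (fun x => ∫ z in lam..x, (psi b σ m z)⁻¹) ((psi b σ m r)⁻¹) r := by
    apply intervalIntegral.integral_hasDerivAt_right
    · exact psi_inv_intervalIntegrable hb hσ hm hA3 hlam hr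
    · exact ContinuousOn.stronglyMeasurableAtFilter isOpen_Ioi
        (psi_inv_continuousOn hb hσ hm hA3) r hr
    · exact ((psi_continuousOn hm) r hr).continuousAt (isOpen_Ioi.mem_nhds hr) |>.inv₀
        (psi_pos hb hσ hm hA3 hr).ne'
  have := h.neg
  apply this.congr_of_eventuallyEq
  filter_upwards with x
  rw [intervalIntegral.integral_symm]
  rfl

end aux3

theorem integral_F_cumulant_eq (b σ β : ℝ) (m n : Measure ℝ)
    (hb : 0 ≤ b) (hσ : 0 ≤ σ) (hβ : 0 ≤ β)
    (hm : IntegrableOn (fun u => min u (u ^ 2)) (Ioi 0) m)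
    (hn : IntegrableOn (fun u => min 1 u) (Ioi 0) n)
    (hA3 : condA3 σ m)
    (v : ℝ → ℝ → ℝ) (hv : IsCumulant b σ m v) :
    (∀ lam > (0 : ℝ),
      ∫⁻ s in Ioi (0 : ℝ), ENNReal.ofReal (Fim β n (v s lam)) =
        ∫⁻ r in Ioo (0 : ℝ) lam, ENNReal.ofReal (Fim β n r / psi b σ m r)) ∧
    ((∃ lam > (0 : ℝ),
        IntegrableOn (fun z => Fim β n z / psi b σ m z) (Ioo 0 lam)) ↔
      ∀ lam > (0 : ℝ),
        ∫⁻ s in Ioi (0 : ℝ), ENNReal.ofReal (Fim β n (v s lam)) < ⊤) := by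
  have hpart1 : ∀ lam > (0 : ℝ),
      ∫⁻ s in Ioi (0 : ℝ), ENNReal.ofReal (Fim β n (v s lam)) =
        ∫⁻ r in Ioo (0 : ℝ) lam, ENNReal.ofReal (Fim β n r / psi b σ m r) := by
    intro lam hlam
    set T : ℝ → ℝ := fun r => ∫ z in r..lam, (psi b σ m z)⁻¹ with hT
    have hanti : StrictAntiOn T (Ioc 0 lam) := T_strictAntiOn hb hσ hm hA3 hlam
    have hTlam : T lam = 0 := intervalIntegral.integral_same
    have hTpos : ∀ r ∈ Ioo (0:ℝ) lam, 0 < T r := by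
      intro r hr
      have := hanti ⟨hr.1, hr.2.le⟩ ⟨hlam, le_rfl⟩ hr.2
      rwa [hTlam] at this
    have hImage : T '' Ioo 0 lam = Ioi (0:ℝ) := by
      apply Subset.antisymm
      · rintro s ⟨r, hr, rfl⟩
        exact hTpos r hr
      · intro s hs
        obtain ⟨hmem, heq⟩ := hv lam hlam s (le_of_lt hs)
        have hlt : v s lam < lam := by
          rcases lt_or_eq_of_le hmem.2 with h | h
          · exact h
          · exfalso
            rw [h] at heq
            rw [intervalIntegral.integral_same] at heq
            exact hs.ne heq
        exact ⟨v s lam, ⟨hmem.1, hlt⟩, heq⟩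
    have hInj : InjOn T (Ioo 0 lam) := (hanti.injOn).mono Ioo_subset_Ioc_self
    have hvT : ∀ r ∈ Ioo (0:ℝ) lam, v (T r) lam = r := by
      intro r hr
      obtain ⟨hmem, heq⟩ := hv lam hlam (T r) (hTpos r hr).le
      exact hanti.injOn hmem ⟨hr.1, hr.2.le⟩ heq
    have hderiv : ∀ r ∈ Ioo (0:ℝ) lam,
        HasDerivWithinAt T (-(psi b σ m r)⁻¹) (Ioo 0 lam) r := fun r hr =>
      (T_hasDerivAt hb hσ hm hA3 hlam hr.1).hasDerivWithinAt
    calc ∫⁻ s in Ioi (0 : ℝ), ENNReal.ofReal (Fim β n (v s lam))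
        = ∫⁻ s in T '' Ioo 0 lam, ENNReal.ofReal (Fim β n (v s lam)) := by rw [hImage]
      _ = ∫⁻ r in Ioo (0:ℝ) lam,
            ENNReal.ofReal |(-(psi b σ m r)⁻¹)| * ENNReal.ofReal (Fim β n (v (T r) lam)) :=
          lintegral_image_eq_lintegral_abs_deriv_mul' measurableSet_Ioo hderiv hInj _
      _ = ∫⁻ r in Ioo (0 : ℝ) lam, ENNReal.ofReal (Fim β n r / psi b σ m r) := by
          apply setLIntegral_congr_fun measurableSet_Ioo
          intro r hr
          dsimp only
          have hψ : 0 < psi b σ m r := psi_pos hb hσ hm hA3 hr.1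
          rw [hvT r hr, abs_neg, abs_of_nonneg (inv_nonneg.mpr hψ.le),
            ← ENNReal.ofReal_mul (inv_nonneg.mpr hψ.le), div_eq_mul_inv, mul_comm]
  refine ⟨hpart1, ?_, ?_⟩
  · rintro ⟨lam0, hlam0, hInt⟩ lam hlam
    rw [hpart1 lam hlam]
    have hfin0 : ∫⁻ r in Ioo (0:ℝ) lam0, ENNReal.ofReal (Fim β n r / psi b σ m r) < ⊤ := by
      refine lt_of_le_of_lt (lintegral_mono fun r => ?_) hInt.2
      rw [Real.enorm_eq_ofReal_abs]
      exact ENNReal.ofReal_le_ofReal (le_abs_self _)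
    rcases le_or_gt lam lam0 with h | h
    · exact lt_of_le_of_lt (lintegral_mono_set (Ioo_subset_Ioo_right h)) hfin0
    · have hsub : Ioo (0:ℝ) lam ⊆ Ioo 0 lam0 ∪ Ico lam0 lam := by
        intro r hr
        rcases lt_or_ge r lam0 with h' | h'
        · exact Or.inl ⟨hr.1, h'⟩
        · exact Or.inr ⟨h', hr.2⟩
      refine lt_of_le_of_lt ((lintegral_mono_set hsub).trans (lintegral_union_le _ _ _)) ?_
      have hbound : ∫⁻ r in Ico lam0 lam, ENNReal.ofReal (Fim β n r / psi b σ m r)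
          ≤ ENNReal.ofReal (Fim β n lam / psi b σ m lam0) * volume (Ico lam0 lam) := by
        rw [← setLIntegral_const]
        refine setLIntegral_mono measurable_const fun r hr => ?_
        apply ENNReal.ofReal_le_ofReal
        have hψ0 : 0 < psi b σ m lam0 := psi_pos hb hσ hm hA3 hlam0
        exact div_le_div₀ (fim_nonneg hβ hlam.le)
          (fim_mono hβ hn (hlam0.le.trans hr.1) hr.2.le)
          hψ0 (psi_mono hb hσ hm hlam0.le hr.1)
      refine ENNReal.add_lt_top.mpr ⟨hfin0, lt_of_le_of_lt hbound ?_⟩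
      exact ENNReal.mul_lt_top ENNReal.ofReal_lt_top measure_Ico_lt_top
  · intro hfin
    refine ⟨1, one_pos, ?_⟩
    have h1 := hfin 1 one_pos
    rw [hpart1 1 one_pos] at h1
    constructor
    · refine ContinuousOn.aestronglyMeasurable ?_ measurableSet_Ioo
      refine ContinuousOn.mono ?_ (fun r hr => hr.1)
      exact ContinuousOn.div (fun z hz => (fim_continuousAt hn hz).continuousWithinAt)
        (psi_continuousOn hm) (fun z hz => (psi_pos hb hσ hm hA3 hz).ne')
    · rw [hasFiniteIntegral_iff_ofReal]
      · exact h1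
      · refine (ae_restrict_iff' measurableSet_Ioo).mpr (ae_of_all _ fun r hr => ?_)
        exact div_nonneg (fim_nonneg hβ hr.1.le) (psi_pos hb hσ hm hA3 hr.1).le
end

section
/- (Bottleneck effect.) Assume conditions (A1), (A2) and (A3), and fix t > 0. Let μ₀ and μ_t be probability measures on [0,∞) whose Laplace transforms satisfy, for all λ ≥ 0, ∫ e^{−λ z} μ₀(dz) = exp(−G(λ)) and ∫ e^{−λ z} μ_t(dz) = exp(−(G(λ + c(t)) − G(c(t)))). Then μ_t is stochastically smaller than μ₀: μ_t([0, z]) ≥ μ₀([0, z]) for every z ≥ 0. (Here μ₀ is the law of the stationary population size Z₀ and μ_t is the conditional law of the population size Z^A just before the MRCA given A = t.) -/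
open MeasureTheory Real Set Filter

section BottleneckAux
open Topology

private lemma aux_ae_nonneg (μ : Measure ℝ) (h : μ (Iio 0) = 0) :
    ∀ᵐ x ∂μ, (0 : ℝ) ≤ x := by
  rw [ae_iff]
  convert h using 2
  ext x
  simp [not_le]

private lemma aux_integrable (μ : Measure ℝ) [IsFiniteMeasure μ] (h0 : μ (Iio 0) = 0)
    {f : ℝ → ℝ} (hf : Continuous f) {M : ℝ} (hM : ∀ x : ℝ, 0 ≤ x → ‖f x‖ ≤ M) :
    Integrable f μ := by
  refine Integrable.mono' (integrable_const M) hf.aestronglyMeasurable ?_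
  filter_upwards [aux_ae_nonneg μ h0] with x hx using hM x hx

private lemma aux_exp_mem (x : ℝ) (hx : 0 ≤ x) : Real.exp (-x) ∈ Icc (0:ℝ) 1 :=
  ⟨(Real.exp_pos _).le, Real.exp_le_one_iff.mpr (by linarith)⟩

private lemma aux_int_exp (μ : Measure ℝ) [IsProbabilityMeasure μ] (h0 : μ (Iio 0) = 0)
    (lam : ℝ) (hlam : 0 ≤ lam) :
    Integrable (fun x => Real.exp (-(lam * x))) μ := by
  refine aux_integrable μ h0 (by continuity) (M := 1) (fun x hx => ?_)
  rw [Real.norm_eq_abs, Real.abs_exp]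
  exact Real.exp_le_one_iff.mpr (by nlinarith)

/-- Transfer of the tilt identity from exponentials to polynomials in `e^{-x}`. -/
private lemma aux_poly_transfer (μ₀ μt : Measure ℝ)
    [IsProbabilityMeasure μ₀] [IsProbabilityMeasure μt]
    (h₀ : μ₀ (Iio 0) = 0) (ht : μt (Iio 0) = 0) (C : ℝ) (hC : 0 < C)
    (KI : ∀ lam : ℝ, 0 ≤ lam →
      (∫ x, Real.exp (-(lam * x)) ∂μt) * (∫ x, Real.exp (-(C * x)) ∂μ₀)
        = ∫ x, Real.exp (-((lam + C) * x)) ∂μ₀)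
    (q : Polynomial ℝ) :
    (∫ x, q.eval (Real.exp (-x)) ∂μt) * (∫ x, Real.exp (-(C * x)) ∂μ₀)
      = ∫ x, q.eval (Real.exp (-x)) * Real.exp (-(C * x)) ∂μ₀ := by
  have hfun1 : (fun x : ℝ => q.eval (Real.exp (-x)))
      = fun x => ∑ i ∈ Finset.range (q.natDegree + 1),
          q.coeff i * Real.exp (-((i : ℝ) * x)) := by
    funext x
    rw [Polynomial.eval_eq_sum_range]
    refine Finset.sum_congr rfl fun i _ => ?_
    rw [← Real.exp_nat_mul]
    ring_nf
  have hfun2 : (fun x : ℝ => q.eval (Real.exp (-x)) * Real.exp (-(C * x)))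
      = fun x => ∑ i ∈ Finset.range (q.natDegree + 1),
          q.coeff i * Real.exp (-(((i : ℝ) + C) * x)) := by
    funext x
    rw [Polynomial.eval_eq_sum_range, Finset.sum_mul]
    refine Finset.sum_congr rfl fun i _ => ?_
    rw [← Real.exp_nat_mul, mul_assoc, ← Real.exp_add]
    ring_nf
  rw [hfun1, hfun2]
  have e1 := integral_finset_sum (μ := μt) (Finset.range (q.natDegree + 1))
    (f := fun (i : ℕ) (x : ℝ) => q.coeff i * Real.exp (-((i : ℝ) * x)))
    (fun i _ => (aux_int_exp μt ht (i : ℝ) (by positivity)).const_mul _)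
  have e2 := integral_finset_sum (μ := μ₀) (Finset.range (q.natDegree + 1))
    (f := fun (i : ℕ) (x : ℝ) => q.coeff i * Real.exp (-(((i : ℝ) + C) * x)))
    (fun i _ => (aux_int_exp μ₀ h₀ ((i : ℝ) + C) (by positivity)).const_mul _)
  rw [e1, e2, Finset.sum_mul]
  refine Finset.sum_congr rfl fun i _ => ?_
  simp only [integral_const_mul]
  rw [mul_assoc, KI (i : ℝ) (by positivity)]

/-- Transfer of the tilt identity to continuous test functions composed with `e^{-x}`. -/
private lemma aux_cont_transfer (μ₀ μt : Measure ℝ)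
    [IsProbabilityMeasure μ₀] [IsProbabilityMeasure μt]
    (h₀ : μ₀ (Iio 0) = 0) (ht : μt (Iio 0) = 0) (C : ℝ) (hC : 0 < C)
    (KI : ∀ lam : ℝ, 0 ≤ lam →
      (∫ x, Real.exp (-(lam * x)) ∂μt) * (∫ x, Real.exp (-(C * x)) ∂μ₀)
        = ∫ x, Real.exp (-((lam + C) * x)) ∂μ₀)
    (G : ℝ → ℝ) (hG : Continuous G) :
    (∫ x, G (Real.exp (-x)) ∂μt) * (∫ x, Real.exp (-(C * x)) ∂μ₀)
      = ∫ x, G (Real.exp (-x)) * Real.exp (-(C * x)) ∂μ₀ := by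
  have cexp : Continuous fun x : ℝ => Real.exp (-x) :=
    Real.continuous_exp.comp continuous_neg
  have cw : Continuous fun x : ℝ => Real.exp (-(C * x)) :=
    Real.continuous_exp.comp (continuous_const.mul continuous_id).neg
  -- bound for G on [0,1]
  obtain ⟨M, hM⟩ := (isCompact_Icc (a := (0:ℝ)) (b := 1)).exists_bound_of_continuousOn
    hG.continuousOn
  set LC : ℝ := ∫ x, Real.exp (-(C * x)) ∂μ₀ with hLCdef
  have hLC0 : 0 ≤ LC := by
    refine integral_nonneg fun x => (Real.exp_pos _).le
  have hLC1 : LC ≤ 1 := by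
    have h := norm_integral_le_of_norm_le_const (μ := μ₀)
      (f := fun x => Real.exp (-(C * x))) (C := 1) ?_
    · rw [measureReal_def, measure_univ, ENNReal.toReal_one, mul_one] at h
      calc LC ≤ ‖LC‖ := le_abs_self _
      _ ≤ 1 := h
    · filter_upwards [aux_ae_nonneg μ₀ h₀] with x hx
      rw [Real.norm_eq_abs, Real.abs_exp]
      exact Real.exp_le_one_iff.mpr (by nlinarith)
  -- integrability of the composites
  have hMnn : 0 ≤ M := le_trans (norm_nonneg _) (hM 0 ⟨le_refl _, zero_le_one⟩)
  have hGb : ∀ x : ℝ, 0 ≤ x → ‖G (Real.exp (-x))‖ ≤ M := fun x hx =>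
    hM _ (aux_exp_mem x hx)
  have hintG : Integrable (fun x => G (Real.exp (-x))) μt :=
    aux_integrable μt ht (hG.comp cexp) hGb
  have hintGw : Integrable (fun x => G (Real.exp (-x)) * Real.exp (-(C * x))) μ₀ := by
    refine aux_integrable μ₀ h₀ ((hG.comp cexp).mul cw) (M := M) (fun x hx => ?_)
    rw [norm_mul]
    calc ‖G (Real.exp (-x))‖ * ‖Real.exp (-(C * x))‖
        ≤ M * 1 := by
          refine mul_le_mul (hGb x hx) ?_ (norm_nonneg _) hMnn
          rw [Real.norm_eq_abs, Real.abs_exp]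
          exact Real.exp_le_one_iff.mpr (by nlinarith)
      _ = M := mul_one M
  -- the ε-approximation argument
  have key : ∀ ε : ℝ, 0 < ε →
      |(∫ x, G (Real.exp (-x)) ∂μt) * LC
        - ∫ x, G (Real.exp (-x)) * Real.exp (-(C * x)) ∂μ₀| ≤ 2 * ε := by
    intro ε hε
    obtain ⟨q, hq⟩ := exists_polynomial_near_of_continuousOn 0 1 G hG.continuousOn ε hε
    have hintq : Integrable (fun x => q.eval (Real.exp (-x))) μt := by
      obtain ⟨Mq, hMq⟩ := (isCompact_Icc (a := (0:ℝ)) (b := 1)).exists_bound_of_continuousOn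
        (Polynomial.continuous q).continuousOn
      exact aux_integrable μt ht ((Polynomial.continuous q).comp cexp)
        (fun x hx => hMq _ (aux_exp_mem x hx))
    have hintqw : Integrable (fun x => q.eval (Real.exp (-x)) * Real.exp (-(C * x))) μ₀ := by
      obtain ⟨Mq, hMq⟩ := (isCompact_Icc (a := (0:ℝ)) (b := 1)).exists_bound_of_continuousOn
        (Polynomial.continuous q).continuousOn
      have hMqnn : 0 ≤ Mq := le_trans (norm_nonneg _) (hMq 0 ⟨le_refl _, zero_le_one⟩)
      refine aux_integrable μ₀ h₀ (((Polynomial.continuous q).comp cexp).mul cw)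
        (M := Mq) (fun x hx => ?_)
      rw [norm_mul]
      calc ‖q.eval (Real.exp (-x))‖ * ‖Real.exp (-(C * x))‖
          ≤ Mq * 1 := by
            refine mul_le_mul (hMq _ (aux_exp_mem x hx)) ?_ (norm_nonneg _) hMqnn
            rw [Real.norm_eq_abs, Real.abs_exp]
            exact Real.exp_le_one_iff.mpr (by nlinarith)
        _ = Mq := mul_one Mq
    have hPq := aux_poly_transfer μ₀ μt h₀ ht C hC KI q
    -- bound 1 : |∫ G∘ dμt − ∫ q∘ dμt| ≤ ε
    have b1 : |(∫ x, G (Real.exp (-x)) ∂μt) - ∫ x, q.eval (Real.exp (-x)) ∂μt| ≤ ε := by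
      rw [← integral_sub hintG hintq]
      have h := norm_integral_le_of_norm_le_const (μ := μt)
        (f := fun x => G (Real.exp (-x)) - q.eval (Real.exp (-x))) (C := ε) ?_
      · rwa [measureReal_def, measure_univ, ENNReal.toReal_one, mul_one] at h
      · filter_upwards [aux_ae_nonneg μt ht] with x hx
        rw [Real.norm_eq_abs, abs_sub_comm]
        exact (hq _ (aux_exp_mem x hx)).le
    -- bound 2 : |∫ q∘·w dμ₀ − ∫ G∘·w dμ₀| ≤ ε
    have b2 : |(∫ x, q.eval (Real.exp (-x)) * Real.exp (-(C * x)) ∂μ₀)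
        - ∫ x, G (Real.exp (-x)) * Real.exp (-(C * x)) ∂μ₀| ≤ ε := by
      rw [← integral_sub hintqw hintGw]
      have h := norm_integral_le_of_norm_le_const (μ := μ₀)
        (f := fun x => q.eval (Real.exp (-x)) * Real.exp (-(C * x))
          - G (Real.exp (-x)) * Real.exp (-(C * x))) (C := ε) ?_
      · rwa [measureReal_def, measure_univ, ENNReal.toReal_one, mul_one] at h
      · filter_upwards [aux_ae_nonneg μ₀ h₀] with x hx
        have : q.eval (Real.exp (-x)) * Real.exp (-(C * x))
            - G (Real.exp (-x)) * Real.exp (-(C * x))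
            = (q.eval (Real.exp (-x)) - G (Real.exp (-x))) * Real.exp (-(C * x)) := by ring
        rw [this, Real.norm_eq_abs, abs_mul, Real.abs_exp]
        calc |q.eval (Real.exp (-x)) - G (Real.exp (-x))| * Real.exp (-(C * x))
            ≤ ε * 1 := by
              refine mul_le_mul (hq _ (aux_exp_mem x hx)).le ?_ (Real.exp_pos _).le hε.le
              exact Real.exp_le_one_iff.mpr (by nlinarith)
          _ = ε := mul_one ε
    set X := ∫ x, G (Real.exp (-x)) ∂μt
    set Y := ∫ x, q.eval (Real.exp (-x)) ∂μt
    set Xw := ∫ x, G (Real.exp (-x)) * Real.exp (-(C * x)) ∂μ₀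
    set Yw := ∫ x, q.eval (Real.exp (-x)) * Real.exp (-(C * x)) ∂μ₀
    have hline : X * LC - Xw = (X - Y) * LC + (Yw - Xw) := by
      rw [← hPq]; ring
    rw [hline]
    calc |(X - Y) * LC + (Yw - Xw)| ≤ |(X - Y) * LC| + |Yw - Xw| := abs_add_le _ _
      _ ≤ ε * 1 + ε := by
          rw [abs_mul]
          have hLCa : |LC| ≤ 1 := by rw [abs_of_nonneg hLC0]; exact hLC1
          have h3 : |X - Y| * |LC| ≤ ε * 1 :=
            mul_le_mul b1 hLCa (abs_nonneg _) hε.le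
          linarith
      _ = 2 * ε := by ring
  -- conclude the equality
  by_contra hne
  have hpos : 0 < |(∫ x, G (Real.exp (-x)) ∂μt) * LC
      - ∫ x, G (Real.exp (-x)) * Real.exp (-(C * x)) ∂μ₀| :=
    abs_pos.mpr (sub_ne_zero.mpr hne)
  have := key _ (by positivity :
    (0:ℝ) < |(∫ x, G (Real.exp (-x)) ∂μt) * LC
      - ∫ x, G (Real.exp (-x)) * Real.exp (-(C * x)) ∂μ₀| / 4)
  linarith

/-- Stochastic dominance for an exponentially tilted measure. -/
private theorem aux_tilt (μ₀ μt : Measure ℝ)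
    [IsProbabilityMeasure μ₀] [IsProbabilityMeasure μt]
    (h₀ : μ₀ (Iio 0) = 0) (ht : μt (Iio 0) = 0) (C : ℝ) (hC : 0 < C)
    (KI : ∀ lam : ℝ, 0 ≤ lam →
      (∫ x, Real.exp (-(lam * x)) ∂μt) * (∫ x, Real.exp (-(C * x)) ∂μ₀)
        = ∫ x, Real.exp (-((lam + C) * x)) ∂μ₀)
    (hLC : 0 < ∫ x, Real.exp (-(C * x)) ∂μ₀) :
    ∀ z ≥ (0 : ℝ), μ₀ (Icc 0 z) ≤ μt (Icc 0 z) := by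
  intro z hz
  -- Main step: comparison with a slightly larger interval on the right.
  have hstep : ∀ δ : ℝ, 0 < δ → μ₀ (Icc 0 z) ≤ μt (Icc 0 (z + δ)) := by
    intro δ hδ
    set w : ℝ → ℝ := fun x => Real.exp (-(C * x)) with hwdef
    set LC : ℝ := ∫ x, w x ∂μ₀ with hLCdef
    have hw : Integrable w μ₀ := aux_int_exp μ₀ h₀ C hC.le
    have hA : MeasurableSet (Icc (0:ℝ) z) := measurableSet_Icc
    have hB : MeasurableSet (Icc (0:ℝ) (z + δ)) := measurableSet_Icc
    set P : ℝ := (μ₀ (Icc (0:ℝ) z)).toReal with hPdef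
    set Q : ℝ := (μ₀ (Icc (0:ℝ) z)ᶜ).toReal with hQdef
    have hP0 : 0 ≤ P := ENNReal.toReal_nonneg
    have hQ0 : 0 ≤ Q := ENNReal.toReal_nonneg
    have hPQ : P + Q = 1 := by
      have h1 : μ₀ (Icc (0:ℝ) z) + μ₀ (Icc (0:ℝ) z)ᶜ = 1 := by
        rw [measure_add_measure_compl hA, measure_univ]
      have h2 := congrArg ENNReal.toReal h1
      rwa [ENNReal.toReal_add (measure_ne_top _ _) (measure_ne_top _ _),
        ENNReal.toReal_one] at h2
    -- tilt inequality : P * LC ≤ ∫_{[0,z]} w dμ₀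
    have hsplit : (∫ x in Icc (0:ℝ) z, w x ∂μ₀) + ∫ x in (Icc (0:ℝ) z)ᶜ, w x ∂μ₀ = LC :=
      integral_add_compl hA hw
    have hI1 : Real.exp (-(C * z)) * P ≤ ∫ x in Icc (0:ℝ) z, w x ∂μ₀ := by
      refine setIntegral_ge_of_const_le_real hA (measure_ne_top _ _)
        (fun x hx => Real.exp_le_exp.mpr ?_) hw.integrableOn
      nlinarith [hx.1, hx.2]
    have hI2 : (∫ x in (Icc (0:ℝ) z)ᶜ, w x ∂μ₀) ≤ Real.exp (-(C * z)) * Q := by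
      have hmono : (∫ x in (Icc (0:ℝ) z)ᶜ, w x ∂μ₀)
          ≤ ∫ _x in (Icc (0:ℝ) z)ᶜ, Real.exp (-(C * z)) ∂μ₀ := by
        refine integral_mono_ae hw.integrableOn (integrable_const _) ?_
        rw [EventuallyLE, ae_restrict_iff' hA.compl]
        filter_upwards [aux_ae_nonneg μ₀ h₀] with x hx hxA
        have hzx : z < x := by
          by_contra hcon
          exact hxA ⟨hx, not_lt.mp hcon⟩
        exact Real.exp_le_exp.mpr (by nlinarith)
      rwa [setIntegral_const, smul_eq_mul, mul_comm] at hmono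
    have TI : P * LC ≤ ∫ x in Icc (0:ℝ) z, w x ∂μ₀ := by
      have e1 := mul_le_mul_of_nonneg_left hI2 hP0
      have e2 := mul_le_mul_of_nonneg_left hI1 hQ0
      calc P * LC
          = P * (∫ x in Icc (0:ℝ) z, w x ∂μ₀)
            + P * ∫ x in (Icc (0:ℝ) z)ᶜ, w x ∂μ₀ := by rw [← hsplit]; ring
        _ ≤ P * (∫ x in Icc (0:ℝ) z, w x ∂μ₀)
            + P * (Real.exp (-(C * z)) * Q) := by linarith
        _ = P * (∫ x in Icc (0:ℝ) z, w x ∂μ₀)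
            + Q * (Real.exp (-(C * z)) * P) := by ring
        _ ≤ P * (∫ x in Icc (0:ℝ) z, w x ∂μ₀)
            + Q * ∫ x in Icc (0:ℝ) z, w x ∂μ₀ := by linarith
        _ = (P + Q) * ∫ x in Icc (0:ℝ) z, w x ∂μ₀ := by ring
        _ = ∫ x in Icc (0:ℝ) z, w x ∂μ₀ := by rw [hPQ, one_mul]
    -- the continuous interpolation function
    set a' : ℝ := Real.exp (-z) with ha'def
    set b' : ℝ := Real.exp (-(z + δ)) with hb'def
    have hba : b' < a' := Real.exp_lt_exp.mpr (by linarith)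
    set G : ℝ → ℝ := fun y => max 0 (min 1 ((y - b') / (a' - b'))) with hGdef
    have hGcont : Continuous G :=
      continuous_const.max (continuous_const.min
        ((continuous_id.sub continuous_const).div_const _))
    have hG0 : ∀ y, 0 ≤ G y := fun y => le_max_left _ _
    have hG1 : ∀ y, G y ≤ 1 := fun y => max_le zero_le_one (min_le_left _ _)
    have hGone : ∀ y, a' ≤ y → G y = 1 := by
      intro y hy
      have h1 : 1 ≤ (y - b') / (a' - b') :=
        (one_le_div (by linarith)).mpr (by linarith)
      simp only [hGdef]
      rw [min_eq_left h1, max_eq_right zero_le_one]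
    have hGzero : ∀ y, y ≤ b' → G y = 0 := by
      intro y hy
      have hr : (y - b') / (a' - b') ≤ 0 :=
        div_nonpos_iff.mpr (Or.inr ⟨by linarith, by linarith⟩)
      simp only [hGdef]
      exact max_eq_left (le_trans (min_le_right _ _) hr)
    -- integrability of composites
    have cexp : Continuous fun x : ℝ => Real.exp (-x) :=
      Real.continuous_exp.comp continuous_neg
    have cw : Continuous w :=
      Real.continuous_exp.comp (continuous_const.mul continuous_id).neg
    have hintGt : Integrable (fun x => G (Real.exp (-x))) μt := by
      refine aux_integrable μt ht (hGcont.comp cexp) (M := 1) (fun x hx => ?_)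
      rw [Real.norm_eq_abs, abs_of_nonneg (hG0 _)]
      exact hG1 _
    have hintGw : Integrable (fun x => G (Real.exp (-x)) * w x) μ₀ := by
      refine aux_integrable μ₀ h₀ ((hGcont.comp cexp).mul cw) (M := 1) (fun x hx => ?_)
      rw [norm_mul, Real.norm_eq_abs, abs_of_nonneg (hG0 _), Real.norm_eq_abs,
        Real.abs_exp]
      calc G (Real.exp (-x)) * Real.exp (-(C * x)) ≤ 1 * 1 := by
            refine mul_le_mul (hG1 _) ?_ (Real.exp_pos _).le zero_le_one
            exact Real.exp_le_one_iff.mpr (by nlinarith)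
        _ = 1 := mul_one 1
    -- step 2 : ∫_{[0,z]} w ≤ ∫ G∘ ⋅ w
    have c2 : (∫ x in Icc (0:ℝ) z, w x ∂μ₀) ≤ ∫ x, G (Real.exp (-x)) * w x ∂μ₀ := by
      have heq : (∫ x in Icc (0:ℝ) z, w x ∂μ₀)
          = ∫ x in Icc (0:ℝ) z, G (Real.exp (-x)) * w x ∂μ₀ := by
        refine setIntegral_congr_fun hA (fun x hx => ?_)
        have hax : a' ≤ Real.exp (-x) := Real.exp_le_exp.mpr (by linarith [hx.2])
        rw [hGone _ hax, one_mul]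
      rw [heq]
      exact setIntegral_le_integral hintGw
        (ae_of_all _ (fun x => mul_nonneg (hG0 _) (Real.exp_pos _).le))
    -- step 3 : transfer
    have c3 := aux_cont_transfer μ₀ μt h₀ ht C hC KI G hGcont
    -- step 4 : ∫ G∘ dμt ≤ μt [0, z+δ]
    have c4 : (∫ x, G (Real.exp (-x)) ∂μt) ≤ (μt (Icc (0:ℝ) (z + δ))).toReal := by
      have hsplitB : (∫ x, G (Real.exp (-x)) ∂μt)
          = (∫ x in Icc (0:ℝ) (z + δ), G (Real.exp (-x)) ∂μt)
            + ∫ x in (Icc (0:ℝ) (z + δ))ᶜ, G (Real.exp (-x)) ∂μt :=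
        (integral_add_compl hB hintGt).symm
      have h5 : (∫ x in Icc (0:ℝ) (z + δ), G (Real.exp (-x)) ∂μt)
          ≤ ∫ _x in Icc (0:ℝ) (z + δ), (1:ℝ) ∂μt :=
        setIntegral_mono_on hintGt.integrableOn (integrable_const _) hB
          (fun x _ => hG1 _)
      have h6 : (∫ x in (Icc (0:ℝ) (z + δ))ᶜ, G (Real.exp (-x)) ∂μt) = 0 := by
        refine integral_eq_zero_of_ae ?_
        rw [EventuallyEq, ae_restrict_iff' hB.compl]
        filter_upwards [aux_ae_nonneg μt ht] with x hx hxB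
        have hzx : z + δ < x := by
          by_contra hcon
          exact hxB ⟨hx, not_lt.mp hcon⟩
        have : Real.exp (-x) ≤ b' := Real.exp_le_exp.mpr (by linarith)
        simp [hGzero _ this]
      rw [hsplitB, h6, add_zero]
      calc (∫ x in Icc (0:ℝ) (z + δ), G (Real.exp (-x)) ∂μt)
          ≤ ∫ _x in Icc (0:ℝ) (z + δ), (1:ℝ) ∂μt := h5
        _ = (μt (Icc (0:ℝ) (z + δ))).toReal := by
            rw [setIntegral_const, smul_eq_mul, mul_one]; rfl
    -- combine
    have hreal : P ≤ (μt (Icc (0:ℝ) (z + δ))).toReal := by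
      have hchain : P * LC ≤ (μt (Icc (0:ℝ) (z + δ))).toReal * LC := by
        calc P * LC ≤ ∫ x in Icc (0:ℝ) z, w x ∂μ₀ := TI
          _ ≤ ∫ x, G (Real.exp (-x)) * w x ∂μ₀ := c2
          _ = (∫ x, G (Real.exp (-x)) ∂μt) * LC := c3.symm
          _ ≤ (μt (Icc (0:ℝ) (z + δ))).toReal * LC :=
              mul_le_mul_of_nonneg_right c4 (le_of_lt hLC)
      exact le_of_mul_le_mul_right hchain hLC
    rw [← ENNReal.toReal_le_toReal (measure_ne_top _ _) (measure_ne_top _ _)]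
    exact hreal
  -- pass to the limit δ → 0
  have hiInter : (⋂ k : ℕ, Icc (0:ℝ) (z + 1 / (k + 1))) = Icc 0 z := by
    ext x
    simp only [mem_iInter, mem_Icc]
    constructor
    · intro h
      refine ⟨(h 0).1, le_of_forall_pos_le_add fun ε hε => ?_⟩
      obtain ⟨k, hk⟩ := exists_nat_one_div_lt hε
      exact le_trans (h k).2 (by linarith)
    · rintro ⟨h0, h1⟩ k
      have : (0:ℝ) < 1 / ((k:ℝ) + 1) := by positivity
      exact ⟨h0, by linarith⟩
  have hseq : Tendsto (fun k : ℕ => μt (Icc (0:ℝ) (z + 1 / (k + 1)))) atTop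
      (𝓝 (μt (Icc 0 z))) := by
    have := tendsto_measure_iInter_atTop (μ := μt)
      (s := fun k : ℕ => Icc (0:ℝ) (z + 1 / (k + 1)))
      (fun k => measurableSet_Icc.nullMeasurableSet) ?_ ⟨0, measure_ne_top _ _⟩
    · rwa [hiInter] at this
    · intro i j hij
      refine Icc_subset_Icc le_rfl ((add_le_add_iff_left z).mpr ?_)
      have h1 : (0:ℝ) < (i:ℝ) + 1 := by positivity
      have h2 : (i:ℝ) + 1 ≤ (j:ℝ) + 1 := by
        have := (Nat.cast_le (α := ℝ)).mpr hij
        linarith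
      exact one_div_le_one_div_of_le h1 h2
  refine ge_of_tendsto hseq (Eventually.of_forall fun k => hstep _ (by positivity))

end BottleneckAux

/-- Condition (A2): `∫₀^λ F(z)/ψ(z) dz < ∞` for some `λ > 0`. -/
def condA2 (b σ β : ℝ) (m n : Measure ℝ) : Prop :=
  ∃ lam > (0 : ℝ), IntegrableOn (fun z => Fim β n z / psi b σ m z) (Ioo 0 lam)

/-- Under (A1) and (A3), `c(t) ∈ (0,∞)` is defined by `∫_{c(t)}^∞ dz/ψ(z) = t`. -/
def IsExtinctionRate (b σ : ℝ) (m : Measure ℝ) (c : ℝ → ℝ) : Prop :=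
  ∀ t > (0 : ℝ), 0 < c t ∧ ∫ z in Ioi (c t), (psi b σ m z)⁻¹ = t

theorem bottleneck_effect (b σ β : ℝ) (m n : Measure ℝ)
    (hb : 0 ≤ b) (hσ : 0 ≤ σ) (hβ : 0 ≤ β)
    (hm : IntegrableOn (fun u => min u (u ^ 2)) (Ioi 0) m)
    (hn : IntegrableOn (fun u => min 1 u) (Ioi 0) n)
    (hA1 : IntegrableOn (fun z => (psi b σ m z)⁻¹) (Ioi 1))
    (hA2 : condA2 b σ β m n) (hA3 : condA3 σ m)
    (v : ℝ → ℝ → ℝ) (hv : IsCumulant b σ m v)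
    (hv0 : ∀ t ≥ (0 : ℝ), v t 0 = 0)
    (c : ℝ → ℝ) (hc : IsExtinctionRate b σ m c)
    (t : ℝ) (ht : 0 < t)
    (μ₀ μt : Measure ℝ) [IsProbabilityMeasure μ₀] [IsProbabilityMeasure μt]
    (hsupp₀ : μ₀ (Iio 0) = 0) (hsuppt : μt (Iio 0) = 0)
    (hL₀ : ∀ lam ≥ (0 : ℝ),
      ∫ x, Real.exp (-(lam * x)) ∂μ₀ =
        Real.exp (-(∫ s in Ioi (0 : ℝ), Fim β n (v s lam))))
    (hLt : ∀ lam ≥ (0 : ℝ),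
      ∫ x, Real.exp (-(lam * x)) ∂μt =
        Real.exp (-((∫ s in Ioi (0 : ℝ), Fim β n (v s (lam + c t))) -
          ∫ s in Ioi (0 : ℝ), Fim β n (v s (c t))))) :
    ∀ z ≥ (0 : ℝ), μ₀ (Icc 0 z) ≤ μt (Icc 0 z) := by
  intro z hz
  have hC : 0 < c t := (hc t ht).1
  have hLC : 0 < ∫ x, Real.exp (-(c t * x)) ∂μ₀ := by
    rw [hL₀ (c t) hC.le]
    exact Real.exp_pos _
  have KI : ∀ lam : ℝ, 0 ≤ lam →
      (∫ x, Real.exp (-(lam * x)) ∂μt) * (∫ x, Real.exp (-(c t * x)) ∂μ₀)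
        = ∫ x, Real.exp (-((lam + c t) * x)) ∂μ₀ := by
    intro lam hlam
    rw [hLt lam hlam, hL₀ (c t) hC.le, hL₀ (lam + c t) (by linarith), ← Real.exp_add]
    congr 1
    ring
  exact aux_tilt μ₀ μt hsupp₀ hsuppt (c t) hC KI hLC z hz
end
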